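/- Let f̃(x) = log₂(x)/(log₂(4+log₂ x))³. Then for all x ≥ 1 and y ≥ 0, f̃(x+y) ≤ f̃(x) + 1.5·y, and for all x ≥ 3000², f̃'(x) ≥ 0.32/(x·(log₂(4+log₂ x))³). -/

import Mathlib

noncomputable def ft (x : ℝ) : ℝ := Real.logb 2 x / (Real.logb 2 (4 + Real.logb 2 x)) ^ 3

set_option maxHeartbeats 1000000 in
theorem stmt_17 :
    (∀ x y : ℝ, 1 ≤ x → 0 ≤ y → ft (x + y) ≤ ft x + 1.5 * y) ∧
    (∀ x : ℝ, (3000 : ℝ) ^ 2 ≤ x →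
      deriv ft x ≥ 0.32 / (x * (Real.logb 2 (4 + Real.logb 2 x)) ^ 3)) := by
  constructor
  · intro x y hx hy
    have hx0 : (0:ℝ) < x := by linarith
    have hxy0 : (0:ℝ) < x + y := by linarith
    simp only [ft]
    set L1 := Real.logb 2 x with hL1d
    set L2 := Real.logb 2 (x + y) with hL2d
    have hL1n : 0 ≤ L1 := Real.logb_nonneg one_lt_two hx
    have hLle : L1 ≤ L2 := Real.logb_le_logb_of_le one_lt_two hx0 (by linarith)
    set D1 := Real.logb 2 (4 + L1) with hD1d
    set D2 := Real.logb 2 (4 + L2) with hD2d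
    have hD1 : 2 ≤ D1 := by
      have h4 : Real.logb 2 (4:ℝ) = 2 := by
        rw [show (4:ℝ) = 2 ^ (2:ℕ) by norm_num, Real.logb_pow,
          Real.logb_self_eq_one (by norm_num : (1:ℝ) < 2)]
        norm_num
      have := Real.logb_le_logb_of_le one_lt_two (by norm_num : (0:ℝ) < 4)
        (by linarith : (4:ℝ) ≤ 4 + L1)
      rw [h4] at this
      exact this
    have hD12 : D1 ≤ D2 := Real.logb_le_logb_of_le one_lt_two (by linarith) (by linarith)
    have hD1pos : (0:ℝ) < D1 := by linarith
    have hD2pos : (0:ℝ) < D2 := by linarith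
    have hL2n : 0 ≤ L2 := le_trans hL1n hLle
    have hcube : D1 ^ 3 ≤ D2 ^ 3 := pow_le_pow_left₀ hD1pos.le hD12 3
    have h8 : (8:ℝ) ≤ D1 ^ 3 := by
      calc (8:ℝ) = 2 ^ 3 := by norm_num
        _ ≤ D1 ^ 3 := pow_le_pow_left₀ (by norm_num) hD1 3
    have hD1c : (0:ℝ) < D1 ^ 3 := by positivity
    have hD2c : (0:ℝ) < D2 ^ 3 := by positivity
    have step1 : L2 / D2 ^ 3 ≤ L2 / D1 ^ 3 :=
      div_le_div_of_nonneg_left hL2n hD1c hcube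
    have hdiff : L2 - L1 ≤ 12 * y := by
      have hlog2 : (0.69:ℝ) < Real.log 2 := by
        have := Real.log_two_gt_d9; linarith
      have h1 : Real.log ((x + y) / x) ≤ (x + y) / x - 1 :=
        Real.log_le_sub_one_of_pos (by positivity)
      have h2 : Real.log ((x + y) / x) = Real.log (x + y) - Real.log x :=
        Real.log_div (ne_of_gt hxy0) (ne_of_gt hx0)
      have h3 : (x + y) / x - 1 ≤ y := by
        rw [div_sub_one (ne_of_gt hx0)]
        have he : (x + y - x) / x = y / x := by ring_nf
        rw [he]
        exact div_le_self hy hx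
      have heq : L2 - L1 = (Real.log (x + y) - Real.log x) / Real.log 2 := by
        rw [hL2d, hL1d, Real.logb, Real.logb, div_sub_div_same]
      rw [heq]
      rw [div_le_iff₀ (by linarith : (0:ℝ) < Real.log 2)]
      nlinarith
    have step2 : (L2 - L1) / D1 ^ 3 ≤ (L2 - L1) / 8 :=
      div_le_div_of_nonneg_left (by linarith) (by norm_num) h8
    have hsplit : L2 / D1 ^ 3 = L1 / D1 ^ 3 + (L2 - L1) / D1 ^ 3 := by ring
    have : (L2 - L1) / 8 ≤ 1.5 * y := by
      rw [div_le_iff₀ (by norm_num : (0:ℝ) < 8)]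
      nlinarith
    linarith
  · intro x hx
    have hx9 : (9000000 : ℝ) ≤ x := by nlinarith
    have hx0 : (0:ℝ) < x := by linarith
    have hxne : x ≠ 0 := ne_of_gt hx0
    have hl2a : (0.6931471:ℝ) < Real.log 2 := by
      have := Real.log_two_gt_d9; linarith
    have hl2b : Real.log 2 < 0.6931472 := by
      have := Real.log_two_lt_d9; linarith
    have hl2pos : (0:ℝ) < Real.log 2 := by linarith
    have hl2ne : Real.log 2 ≠ 0 := ne_of_gt hl2pos
    have hg3 : (84:ℝ) * Real.log 2 < 53 * Real.log 3 := by
      have h : (2:ℝ) ^ (84:ℕ) < 3 ^ (53:ℕ) := by norm_num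
      have h2 := Real.log_lt_log (by positivity) h
      rwa [Real.log_pow, Real.log_pow] at h2
    have hg3' : (1.0985727:ℝ) < Real.log 3 := by linarith
    have hp : 23 * Real.log 2 ≤ Real.log x := by
      have h : (2:ℝ) ^ (23:ℕ) ≤ x := by norm_num; linarith
      have h2 := Real.log_le_log (by positivity) h
      rwa [Real.log_pow] at h2
    have hppos : (0:ℝ) < Real.log x := by nlinarith
    have htpos : (0:ℝ) < 4 + Real.log x / Real.log 2 := by positivity
    have ht : (27:ℝ) ≤ 4 + Real.log x / Real.log 2 := by
      have h23 : (23:ℝ) ≤ Real.log x / Real.log 2 := (le_div_iff₀ hl2pos).mpr (by linarith)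
      linarith
    have hqpos : (0:ℝ) < Real.log (4 + Real.log x / Real.log 2) :=
      Real.log_pos (by linarith)
    have hq : 3 * Real.log 3 + 1 - 27 / (4 + Real.log x / Real.log 2)
        ≤ Real.log (4 + Real.log x / Real.log 2) := by
      have h1 : Real.log (27 / (4 + Real.log x / Real.log 2))
          ≤ 27 / (4 + Real.log x / Real.log 2) - 1 :=
        Real.log_le_sub_one_of_pos (by positivity)
      have h2 : Real.log (27 / (4 + Real.log x / Real.log 2))
          = Real.log 27 - Real.log (4 + Real.log x / Real.log 2) :=
        Real.log_div (by norm_num) (ne_of_gt htpos)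
      have h3 : Real.log (27:ℝ) = 3 * Real.log 3 := by
        rw [show (27:ℝ) = 3 ^ (3:ℕ) by norm_num, Real.log_pow]
        norm_num
      rw [h2, h3] at h1
      linarith
    -- derivative computation
    have hd1 : HasDerivAt (fun y : ℝ => Real.log y / Real.log 2) (x⁻¹ / Real.log 2) x :=
      (Real.hasDerivAt_log hxne).div_const _
    have hd2 : HasDerivAt (fun y : ℝ => Real.log (4 + Real.log y / Real.log 2) / Real.log 2)
        (x⁻¹ / Real.log 2 / (4 + Real.log x / Real.log 2) / Real.log 2) x :=
      ((hd1.const_add 4).log (ne_of_gt htpos)).div_const _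
    have hd4 := hd2.pow 3
    have hDne : (Real.log (4 + Real.log x / Real.log 2) / Real.log 2) ^ 3 ≠ 0 := by
      positivity
    have hd5 := hd1.div hd4 hDne
    have hft : ft = fun y : ℝ =>
        Real.log y / Real.log 2 / (Real.log (4 + Real.log y / Real.log 2) / Real.log 2) ^ 3 := by
      funext y
      simp only [ft, Real.logb]
    simp only [Real.logb]
    rw [ge_iff_le, hft]
    rw [(show HasDerivAt (fun y : ℝ => Real.log y / Real.log 2 / (Real.log (4 + Real.log y / Real.log 2) / Real.log 2) ^ 3)
      ((x⁻¹ / Real.log 2 * (Real.log (4 + Real.log x / Real.log 2) / Real.log 2) ^ 3 -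
        Real.log x / Real.log 2 * (((3:ℕ):ℝ) * (Real.log (4 + Real.log x / Real.log 2) / Real.log 2) ^ (3 - 1) *
          (x⁻¹ / Real.log 2 / (4 + Real.log x / Real.log 2) / Real.log 2))) /
        ((Real.log (4 + Real.log x / Real.log 2) / Real.log 2) ^ 3) ^ 2) x from hd5).deriv]
    set l2 := Real.log 2 with hl2def
    set p := Real.log x with hpdef
    set t := 4 + p / l2 with htdef
    set q := Real.log t with hqdef
    have htne : t ≠ 0 := ne_of_gt htpos
    have hqne : q ≠ 0 := ne_of_gt hqpos
    clear_value l2 p t q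
    have hpeq : p = (t - 4) * l2 := by
      rw [htdef]; field_simp; ring
    -- key inequality
    have hqt : (3 * Real.log 3 + 1) * t - 27 ≤ q * t := by
      have h := mul_le_mul_of_nonneg_right hq htpos.le
      have he : (3 * Real.log 3 + 1 - 27 / t) * t = (3 * Real.log 3 + 1) * t - 27 := by
        field_simp
      rw [he] at h
      exact h
    have hqtnn : (0:ℝ) ≤ (3 * Real.log 3 + 1) * t - 27 := by
      nlinarith [mul_le_mul (by linarith : (4:ℝ) ≤ 3 * Real.log 3 + 1) ht
        (by norm_num : (0:ℝ) ≤ 27) (by linarith)]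
    have c1 : (0.778:ℝ) ≤ 1 - 0.32 * l2 := by linarith
    have h5 : (0.778:ℝ) * ((3 * Real.log 3 + 1) * t - 27) ≤ (1 - 0.32 * l2) * (t * q) := by
      have hm := mul_le_mul c1 hqt hqtnn (by linarith)
      nlinarith [hm]
    have h7 : (3.342:ℝ) ≤ 0.778 * (3 * Real.log 3 + 1) := by linarith
    have hmul : (3.342:ℝ) * t ≤ 0.778 * (3 * Real.log 3 + 1) * t :=
      mul_le_mul_of_nonneg_right h7 (by linarith)
    have hfin : 3 * t - 12 ≤ (1 - 0.32 * l2) * (t * q) := by linarith [h5, hmul, ht]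
    have key : 0.32 * (l2 ^ 2 * t * q) ≤ l2 * t * q - 3 * p := by
      have hm := mul_le_mul_of_nonneg_left hfin hl2pos.le
      have hexp : l2 * ((1 - 0.32 * l2) * (t * q)) = l2 * t * q - 0.32 * (l2 ^ 2 * t * q) := by ring
      have hexp2 : l2 * (3 * t - 12) = 3 * ((t - 4) * l2) := by ring
      rw [hexp, hexp2, ← hpeq] at hm
      linarith
    have hgoal : 0.32 / (x * (q / l2) ^ 3) ≤ l2 * (l2 * t * q - 3 * p) / (x * t * q ^ 4) := by
      have hpos1 : (0:ℝ) < x * (q / l2) ^ 3 := by positivity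
      have hpos2 : (0:ℝ) < x * t * q ^ 4 := by positivity
      rw [div_le_div_iff₀ hpos1 hpos2]
      have hrw : l2 * (l2 * t * q - 3 * p) * (x * (q / l2) ^ 3)
          = (l2 * t * q - 3 * p) * (x * q ^ 3 / l2 ^ 2) := by
        field_simp
      rw [hrw]
      calc 0.32 * (x * t * q ^ 4) = 0.32 * (l2 ^ 2 * t * q) * (x * q ^ 3 / l2 ^ 2) := by
            field_simp
        _ ≤ (l2 * t * q - 3 * p) * (x * q ^ 3 / l2 ^ 2) :=
            mul_le_mul_of_nonneg_right key
              (le_of_lt (div_pos (mul_pos hx0 (pow_pos hqpos 3)) (pow_pos hl2pos 2)))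
    refine hgoal.trans (le_of_eq ?_)
    norm_num
    field_simp
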